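/- Let d > 1 and set θ₀ := arcsin(1/d) ∈ (0, π/2). Define, for m ≥ 0 and Φ ∈ [0, θ₀], E(Φ|m) := ∫₀^Φ √(1 − m sin² s) ds and F(Φ|m) := ∫₀^Φ ds/√(1 − m sin² s), and set λ₀ := ∫₀^{θ₀} d/√(1 − d² sin² t) dt. For r ∈ (0,1) and θ ∈ (0, θ₀) define A₁(r,θ) := −2·log r · ( 2 cot θ·√(1 − d² sin² θ) + 2E(θ|d²) − 2F(θ|d²) + 2F(θ₀|d²) − 2E(θ₀|d²) ), A₂(r,θ) := −4·log r·cot θ, and A₃(θ) := 2λ₀·log( cot²(θ/2) ). Then there exist a natural number n ≥ 1 and an angle θ ∈ (0, θ₀) such that, with r := tanⁿ(θ/2) ∈ (0,1), one has A₁(r,θ) > A₂(r,θ) + A₃(θ). -/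

import Mathlib

open Set intervalIntegral

namespace TallRectAux

open Real MeasureTheory

lemma q_pos (d : ℝ) (hd : 1 < d) {s : ℝ} (h0 : 0 ≤ s) (h1 : s < Real.arcsin (1 / d)) :
    0 < 1 - d ^ 2 * Real.sin s ^ 2 := by
  have hd0 : (0:ℝ) < d := lt_trans one_pos hd
  have h1d1 : 1 / d ≤ 1 := by rw [div_le_one hd0]; linarith
  have hθ₀le : Real.arcsin (1 / d) ≤ π / 2 := Real.arcsin_le_pi_div_two _
  have hs : Real.sin s < Real.sin (Real.arcsin (1 / d)) :=
    Real.sin_lt_sin_of_lt_of_le_pi_div_two (by linarith [Real.pi_pos]) hθ₀le h1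
  rw [Real.sin_arcsin (by linarith [one_div_pos.mpr hd0]) h1d1] at hs
  have hsn : 0 ≤ Real.sin s := Real.sin_nonneg_of_nonneg_of_le_pi h0
    (by linarith [Real.pi_pos, lt_of_lt_of_le h1 hθ₀le])
  have hlt : d * Real.sin s < 1 := by
    have := mul_lt_mul_of_pos_left hs hd0
    rwa [mul_one_div, div_self (ne_of_gt hd0)] at this
  have h2 : (d * Real.sin s) ^ 2 < 1 := by nlinarith [mul_nonneg hd0.le hsn]
  nlinarith [h2]

lemma q_lower (d : ℝ) (hd : 1 < d) {s : ℝ} (h0 : 0 ≤ s) (h1 : s ≤ Real.arcsin (1 / d)) :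
    d * Real.cos (Real.arcsin (1 / d)) * (Real.arcsin (1 / d) - s)
      ≤ 1 - d ^ 2 * Real.sin s ^ 2 := by
  set θ₀ := Real.arcsin (1 / d) with hθ₀
  have hd0 : (0:ℝ) < d := lt_trans one_pos hd
  have h1d1 : 1 / d ≤ 1 := by rw [div_le_one hd0]; linarith
  have hθ₀le : θ₀ ≤ π / 2 := Real.arcsin_le_pi_div_two _
  have hθ₀0 : 0 ≤ θ₀ := Real.arcsin_nonneg.mpr (by positivity)
  have hsθ : Real.sin θ₀ = 1 / d := Real.sin_arcsin (by linarith [one_div_pos.mpr hd0]) h1d1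
  have hcos : 0 ≤ Real.cos θ₀ := Real.cos_nonneg_of_mem_Icc
    ⟨by linarith [Real.pi_pos], hθ₀le⟩
  have hA : Real.cos θ₀ * (θ₀ - s) ≤ Real.sin θ₀ - Real.sin s := by
    have hcont : IntervalIntegrable Real.cos MeasureTheory.volume s θ₀ :=
      Real.continuous_cos.intervalIntegrable s θ₀
    have hmono : ∫ t in s..θ₀, Real.cos θ₀ ≤ ∫ t in s..θ₀, Real.cos t := by
      apply intervalIntegral.integral_mono_on h1 intervalIntegrable_const hcont
      intro t ht
      exact Real.cos_le_cos_of_nonneg_of_le_pi (le_trans h0 ht.1)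
        (by linarith [Real.pi_pos]) ht.2
    simpa [integral_cos, smul_eq_mul, mul_comm] using hmono
  have hsn : 0 ≤ Real.sin s := Real.sin_nonneg_of_nonneg_of_le_pi h0
    (by linarith [Real.pi_pos])
  have hsθ0 : 0 ≤ Real.sin θ₀ := by rw [hsθ]; positivity
  have key : (Real.cos θ₀ * (θ₀ - s)) * Real.sin θ₀
      ≤ (Real.sin θ₀ - Real.sin s) * (Real.sin θ₀ + Real.sin s) :=
    mul_le_mul hA (by linarith) hsθ0 (by nlinarith [mul_nonneg hcos (sub_nonneg.2 h1)])
  have hds : d * Real.sin θ₀ = 1 := by rw [hsθ]; field_simp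
  have key2 := mul_le_mul_of_nonneg_left key (sq_nonneg d)
  have e1 : d ^ 2 * (Real.cos θ₀ * (θ₀ - s) * Real.sin θ₀)
      = (d * Real.sin θ₀) * (d * Real.cos θ₀ * (θ₀ - s)) := by ring
  have e2 : d ^ 2 * ((Real.sin θ₀ - Real.sin s) * (Real.sin θ₀ + Real.sin s))
      = (d * Real.sin θ₀) * (d * Real.sin θ₀) - d ^ 2 * Real.sin s ^ 2 := by ring
  rw [e1, e2, hds, one_mul, one_mul] at key2
  linarith

lemma F_integrable (d : ℝ) (hd : 1 < d) :
    IntervalIntegrable (fun s => 1 / Real.sqrt (1 - d ^ 2 * Real.sin s ^ 2))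
      MeasureTheory.volume 0 (Real.arcsin (1 / d)) := by
  set θ₀ := Real.arcsin (1 / d) with hθ₀
  have hd0 : (0:ℝ) < d := lt_trans one_pos hd
  have h1d1 : 1 / d < 1 := by rw [div_lt_one hd0]; exact hd
  have hθ₀pos : 0 < θ₀ := Real.arcsin_pos.mpr (by positivity)
  have hθ₀lt : θ₀ < π / 2 := Real.arcsin_lt_pi_div_two.mpr h1d1
  have hcos : 0 < Real.cos θ₀ := Real.cos_pos_of_mem_Ioo
    ⟨by linarith [Real.pi_pos], hθ₀lt⟩
  set c := d * Real.cos θ₀ with hc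
  have hcpos : 0 < c := by positivity
  -- the dominating function
  have hg0 : IntervalIntegrable (fun x : ℝ => x ^ (-(1:ℝ)/2)) MeasureTheory.volume θ₀ 0 :=
    intervalIntegrable_rpow' (by norm_num)
  have hg1 : IntervalIntegrable (fun x : ℝ => (θ₀ - x) ^ (-(1:ℝ)/2)) MeasureTheory.volume 0 θ₀ := by
    have := hg0.comp_sub_left θ₀
    simpa using this
  have hg : IntervalIntegrable (fun x : ℝ => c ^ (-(1:ℝ)/2) * (θ₀ - x) ^ (-(1:ℝ)/2))
      MeasureTheory.volume 0 θ₀ := hg1.const_mul _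
  apply hg.mono_fun'
  · have hm : Measurable fun s : ℝ => (Real.sqrt (1 - d ^ 2 * Real.sin s ^ 2))⁻¹ := by
      apply Measurable.inv
      exact Real.continuous_sqrt.measurable.comp
        ((measurable_const.sub ((Real.continuous_sin.measurable.pow_const 2).const_mul _)))
    have := hm.aestronglyMeasurable (μ := MeasureTheory.volume.restrict (Set.uIoc 0 θ₀))
    simpa [one_div] using this
  · rw [Set.uIoc_of_le hθ₀pos.le]
    filter_upwards [MeasureTheory.ae_restrict_mem measurableSet_Ioc] with s hs
    have hs0 : 0 ≤ s := hs.1.le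
    have hsθ : s ≤ θ₀ := hs.2
    have hq0 : 0 ≤ 1 - d ^ 2 * Real.sin s ^ 2 := by
      have := q_lower d hd hs0 hsθ
      nlinarith [mul_nonneg hcpos.le (sub_nonneg.2 hsθ)]
    have hql := q_lower d hd hs0 hsθ
    have hfnn : 0 ≤ 1 / Real.sqrt (1 - d ^ 2 * Real.sin s ^ 2) := by positivity
    rw [Real.norm_eq_abs, abs_of_nonneg hfnn]
    rcases eq_or_lt_of_le hsθ with heq | hlt
    · -- s = θ₀ : both sides vanish
      have hq : 1 - d ^ 2 * Real.sin s ^ 2 = 0 := by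
        have hsθ' : Real.sin θ₀ = 1 / d := Real.sin_arcsin
          (by linarith [one_div_pos.mpr hd0]) h1d1.le
        rw [heq, hsθ']; field_simp; norm_num
      rw [hq, Real.sqrt_zero, div_zero, heq, sub_self,
        Real.zero_rpow (by norm_num : (-(1:ℝ)/2) ≠ 0), mul_zero]
    · have hθs : 0 < θ₀ - s := sub_pos.2 hlt
      have hRHS : c ^ (-(1:ℝ)/2) * (θ₀ - s) ^ (-(1:ℝ)/2)
          = 1 / Real.sqrt (c * (θ₀ - s)) := by
        rw [← Real.mul_rpow hcpos.le hθs.le,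
          show (-(1:ℝ)/2) = -(1/2) by norm_num, Real.rpow_neg (by positivity),
          Real.sqrt_eq_rpow, one_div]
        exact (one_div _).symm
      rw [hRHS]
      have hsq : Real.sqrt (c * (θ₀ - s)) ≤ Real.sqrt (1 - d ^ 2 * Real.sin s ^ 2) :=
        Real.sqrt_le_sqrt (by rw [hc]; exact hql)
      have hpos : 0 < Real.sqrt (c * (θ₀ - s)) := Real.sqrt_pos.2 (by positivity)
      exact one_div_le_one_div_of_le hpos hsq

lemma E_integrable (d a b : ℝ) :
    IntervalIntegrable (fun s => Real.sqrt (1 - d ^ 2 * Real.sin s ^ 2))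
      MeasureTheory.volume a b := by
  apply Continuous.intervalIntegrable
  exact Real.continuous_sqrt.comp (by continuity)

end TallRectAux

set_option maxHeartbeats 2000000 in
/-- The decisive area comparison in the proof of Lemma A.1: for suitable `n` and
small `θ`, with `r = tanⁿ(θ/2)`, the piece `Σ₁` of the tall rectangle has
strictly larger area than the comparison surface `D₁ ∪ B₁`, so the pair of tall
rectangles is not area-minimizing. -/
theorem tall_rectangles_not_area_minimizing (d : ℝ) (hd : 1 < d) :
    let θ₀ : ℝ := Real.arcsin (1 / d)
    let E : ℝ → ℝ → ℝ := fun Φ m => ∫ s in (0:ℝ)..Φ, Real.sqrt (1 - m * Real.sin s ^ 2)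
    let F : ℝ → ℝ → ℝ := fun Φ m => ∫ s in (0:ℝ)..Φ, 1 / Real.sqrt (1 - m * Real.sin s ^ 2)
    let lam₀ : ℝ := ∫ t in (0:ℝ)..θ₀, d / Real.sqrt (1 - d ^ 2 * Real.sin t ^ 2)
    let A₁ : ℝ → ℝ → ℝ := fun r θ => -2 * Real.log r *
      (2 * Real.cot θ * Real.sqrt (1 - d ^ 2 * Real.sin θ ^ 2)
        + 2 * E θ (d ^ 2) - 2 * F θ (d ^ 2)
        + 2 * F θ₀ (d ^ 2) - 2 * E θ₀ (d ^ 2))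
    let A₂ : ℝ → ℝ → ℝ := fun r θ => -4 * Real.log r * Real.cot θ
    let A₃ : ℝ → ℝ := fun θ => 2 * lam₀ * Real.log (Real.cot (θ / 2) ^ 2)
    ∃ n : ℕ, 1 ≤ n ∧ ∃ θ ∈ Set.Ioo 0 θ₀,
      Real.tan (θ / 2) ^ n ∈ Set.Ioo (0:ℝ) 1 ∧
      A₂ (Real.tan (θ / 2) ^ n) θ + A₃ θ < A₁ (Real.tan (θ / 2) ^ n) θ := by
  intro θ₀ E F lam₀ A₁ A₂ A₃
  have hd0 : (0:ℝ) < d := lt_trans one_pos hd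
  have h1d1 : 1 / d < 1 := by rw [div_lt_one hd0]; exact hd
  have hθ₀pos : 0 < θ₀ := Real.arcsin_pos.mpr (by positivity)
  have hθ₀lt : θ₀ < Real.pi / 2 := Real.arcsin_lt_pi_div_two.mpr h1d1
  have hpi := Real.pi_pos
  have hFI : IntervalIntegrable (fun s => 1 / Real.sqrt (1 - d ^ 2 * Real.sin s ^ 2))
      MeasureTheory.volume 0 θ₀ := TallRectAux.F_integrable d hd
  have hEI : IntervalIntegrable (fun s => Real.sqrt (1 - d ^ 2 * Real.sin s ^ 2))
      MeasureTheory.volume 0 θ₀ := TallRectAux.E_integrable d 0 θ₀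
  have hFdef : ∀ Φ : ℝ, F Φ (d ^ 2)
      = ∫ s in (0:ℝ)..Φ, 1 / Real.sqrt (1 - d ^ 2 * Real.sin s ^ 2) := fun _ => rfl
  have hEdef : ∀ Φ : ℝ, E Φ (d ^ 2)
      = ∫ s in (0:ℝ)..Φ, Real.sqrt (1 - d ^ 2 * Real.sin s ^ 2) := fun _ => rfl
  obtain ⟨K, hK⟩ : ∃ x : ℝ, x = F θ₀ (d ^ 2) - E θ₀ (d ^ 2) := ⟨_, rfl⟩
  have hKpos : 0 < K := by
    rw [hK, hFdef, hEdef, ← intervalIntegral.integral_sub hFI hEI]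
    apply intervalIntegral_pos_of_pos_on (hFI.sub hEI) ?_ hθ₀pos
    intro x hx
    have hq0 : 0 < 1 - d ^ 2 * Real.sin x ^ 2 := TallRectAux.q_pos d hd hx.1.le hx.2
    have hsx : 0 < Real.sin x := Real.sin_pos_of_pos_of_lt_pi hx.1 (by linarith [hx.2])
    have hq1 : 1 - d ^ 2 * Real.sin x ^ 2 < 1 := by
      have : 0 < d ^ 2 * Real.sin x ^ 2 := by positivity
      linarith
    have hu0 : 0 < Real.sqrt (1 - d ^ 2 * Real.sin x ^ 2) := Real.sqrt_pos.2 hq0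
    have hu1 : Real.sqrt (1 - d ^ 2 * Real.sin x ^ 2) < 1 := by
      have := Real.sqrt_lt_sqrt hq0.le hq1
      rwa [Real.sqrt_one] at this
    have h2 : 1 < 1 / Real.sqrt (1 - d ^ 2 * Real.sin x ^ 2) := by
      rw [lt_div_iff₀ hu0]; linarith
    linarith
  have hlam : lam₀ = d * F θ₀ (d ^ 2) := by
    rw [hFdef, ← intervalIntegral.integral_const_mul]
    show (∫ t in (0:ℝ)..θ₀, d / Real.sqrt (1 - d ^ 2 * Real.sin t ^ 2)) = _
    simp_rw [mul_one_div]
  -- small-angle setup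
  obtain ⟨qs, hqs⟩ : ∃ x : ℝ, x = 1 - d ^ 2 * Real.sin (θ₀ / 2) ^ 2 := ⟨_, rfl⟩
  have hqspos : 0 < qs := by rw [hqs]; exact TallRectAux.q_pos d hd (by linarith) (by linarith)
  obtain ⟨C, hC⟩ : ∃ x : ℝ, x = d ^ 2 + 1 / Real.sqrt qs := ⟨_, rfl⟩
  have hCpos : 0 < C := by rw [hC]; positivity
  obtain ⟨θ, hθdef⟩ : ∃ x : ℝ, x = min (θ₀ / 2) (K / (2 * C)) := ⟨_, rfl⟩
  have hθpos : 0 < θ := by rw [hθdef]; exact lt_min (by linarith) (by positivity)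
  have hθhalf : θ ≤ θ₀ / 2 := by rw [hθdef]; exact min_le_left _ _
  have hθC : θ ≤ K / (2 * C) := by rw [hθdef]; exact min_le_right _ _
  have hθlt2 : θ < θ₀ := lt_of_le_of_lt hθhalf (by linarith)
  have hθpi : θ < Real.pi / 2 := lt_trans hθlt2 hθ₀lt
  have hsθ : 0 < Real.sin θ := Real.sin_pos_of_pos_of_lt_pi hθpos (by linarith)
  have hcθ : 0 < Real.cos θ := Real.cos_pos_of_mem_Ioo ⟨by linarith, hθpi⟩
  have hqθ0 : 0 < 1 - d ^ 2 * Real.sin θ ^ 2 := TallRectAux.q_pos d hd hθpos.le hθlt2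
  -- cot bound
  have hcot : -(d ^ 2 * θ) ≤ Real.cot θ * (Real.sqrt (1 - d ^ 2 * Real.sin θ ^ 2) - 1) := by
    have hsq := Real.sq_sqrt hqθ0.le
    have hsn := Real.sqrt_nonneg (1 - d ^ 2 * Real.sin θ ^ 2)
    have h1 : 1 - Real.sqrt (1 - d ^ 2 * Real.sin θ ^ 2) ≤ d ^ 2 * Real.sin θ ^ 2 := by
      nlinarith [sq_nonneg (d * Real.sin θ)]
    have hcotpos : 0 ≤ Real.cot θ := by
      rw [Real.cot_eq_cos_div_sin]; positivity
    have h2 : Real.cot θ * (1 - Real.sqrt (1 - d ^ 2 * Real.sin θ ^ 2))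
        ≤ Real.cot θ * (d ^ 2 * Real.sin θ ^ 2) := mul_le_mul_of_nonneg_left h1 hcotpos
    have h3 : Real.cot θ * (d ^ 2 * Real.sin θ ^ 2) = d ^ 2 * (Real.cos θ * Real.sin θ) := by
      rw [Real.cot_eq_cos_div_sin]; field_simp
    have h4 : Real.cos θ * Real.sin θ ≤ θ := by
      nlinarith [Real.sin_le hθpos.le, Real.cos_le_one θ]
    have h5 : d ^ 2 * (Real.cos θ * Real.sin θ) ≤ d ^ 2 * θ :=
      mul_le_mul_of_nonneg_left h4 (sq_nonneg d)
    linarith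
  -- integrability on [0, θ]
  have hsubset : Set.uIcc 0 θ ⊆ Set.uIcc (0:ℝ) θ₀ := by
    rw [Set.uIcc_of_le hθpos.le, Set.uIcc_of_le hθ₀pos.le]
    exact Set.Icc_subset_Icc le_rfl hθlt2.le
  have hFsub : IntervalIntegrable (fun s => 1 / Real.sqrt (1 - d ^ 2 * Real.sin s ^ 2))
      MeasureTheory.volume 0 θ := hFI.mono_set hsubset
  have hEsub : IntervalIntegrable (fun s => Real.sqrt (1 - d ^ 2 * Real.sin s ^ 2))
      MeasureTheory.volume 0 θ := TallRectAux.E_integrable d 0 θ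
  -- bound on F θ - E θ
  have hFEb : F θ (d ^ 2) - E θ (d ^ 2) ≤ θ * (1 / Real.sqrt qs) := by
    rw [hFdef, hEdef, ← intervalIntegral.integral_sub hFsub hEsub]
    have hmono : (∫ s in (0:ℝ)..θ, (1 / Real.sqrt (1 - d ^ 2 * Real.sin s ^ 2)
        - Real.sqrt (1 - d ^ 2 * Real.sin s ^ 2)))
        ≤ ∫ _s in (0:ℝ)..θ, (1 / Real.sqrt qs) := by
      apply intervalIntegral.integral_mono_on hθpos.le (hFsub.sub hEsub)
        intervalIntegrable_const
      intro x hx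
      have hx0 : 0 ≤ x := hx.1
      have hxh : x ≤ θ₀ / 2 := le_trans hx.2 hθhalf
      have hsinx : 0 ≤ Real.sin x := Real.sin_nonneg_of_nonneg_of_le_pi hx0 (by linarith)
      have hsmono : Real.sin x ≤ Real.sin (θ₀ / 2) :=
        Real.sin_le_sin_of_le_of_le_pi_div_two (by linarith) (by linarith) hxh
      have hqx : qs ≤ 1 - d ^ 2 * Real.sin x ^ 2 := by
        have h' : Real.sin x ^ 2 ≤ Real.sin (θ₀ / 2) ^ 2 := by nlinarith
        have h'' := mul_le_mul_of_nonneg_left h' (sq_nonneg d)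
        rw [hqs]; linarith
      have h1 : Real.sqrt qs ≤ Real.sqrt (1 - d ^ 2 * Real.sin x ^ 2) :=
        Real.sqrt_le_sqrt hqx
      have h2 : 1 / Real.sqrt (1 - d ^ 2 * Real.sin x ^ 2) ≤ 1 / Real.sqrt qs :=
        one_div_le_one_div_of_le (Real.sqrt_pos.2 hqspos) h1
      have h3 : 0 ≤ Real.sqrt (1 - d ^ 2 * Real.sin x ^ 2) := Real.sqrt_nonneg _
      linarith
    simpa [intervalIntegral.integral_const, smul_eq_mul] using hmono
  -- the bracket
  obtain ⟨B, hB⟩ : ∃ x : ℝ, x = Real.cot θ * (Real.sqrt (1 - d ^ 2 * Real.sin θ ^ 2) - 1)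
      + (E θ (d ^ 2) - F θ (d ^ 2)) + K := ⟨_, rfl⟩
  have hBge : K / 2 ≤ B := by
    have hCθ : C * θ ≤ K / 2 := by
      have h1 : C * θ ≤ C * (K / (2 * C)) := mul_le_mul_of_nonneg_left hθC hCpos.le
      have h2 : C * (K / (2 * C)) = K / 2 := by field_simp
      linarith
    have he : -(d ^ 2 * θ) - θ * (1 / Real.sqrt qs) = -(C * θ) := by rw [hC]; ring
    rw [hB]
    linarith [hcot, hFEb]
  have hBpos : 0 < B := lt_of_lt_of_le (by linarith) hBge
  -- choose n
  obtain ⟨n, hn⟩ : ∃ m : ℕ, m = Nat.ceil (2 * lam₀ / K) + 1 := ⟨_, rfl⟩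
  have hn1 : 1 ≤ n := by rw [hn]; exact Nat.le_add_left 1 _
  have hnB : lam₀ < (n : ℝ) * B := by
    have h1 : 2 * lam₀ / K < (n : ℝ) := by
      have h0 := Nat.le_ceil (2 * lam₀ / K)
      have hlt' : Nat.ceil (2 * lam₀ / K) < n := by rw [hn]; exact Nat.lt_succ_self _
      have h0' : ((Nat.ceil (2 * lam₀ / K) : ℕ) : ℝ) < (n : ℝ) := by exact_mod_cast hlt'
      linarith
    have h3 : lam₀ < (n : ℝ) * (K / 2) := by
      have hKne : K ≠ 0 := ne_of_gt hKpos
      have he : lam₀ = (2 * lam₀ / K) * (K / 2) := by field_simp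
      rw [he]
      exact mul_lt_mul_of_pos_right h1 (by positivity)
    have h2 : (n : ℝ) * (K / 2) ≤ (n : ℝ) * B := by
      apply mul_le_mul_of_nonneg_left hBge (by positivity)
    exact lt_of_lt_of_le h3 h2
  -- the radius
  have hquarter : θ / 2 < Real.pi / 4 := by linarith
  have ht0 : 0 < Real.tan (θ / 2) :=
    Real.tan_pos_of_pos_of_lt_pi_div_two (by linarith) (by linarith)
  have ht1 : Real.tan (θ / 2) < 1 := by
    have := Real.tan_lt_tan_of_nonneg_of_lt_pi_div_two (by linarith : (0:ℝ) ≤ θ / 2)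
      (by linarith : Real.pi / 4 < Real.pi / 2) hquarter
    rwa [Real.tan_pi_div_four] at this
  have hrpos : 0 < Real.tan (θ / 2) ^ n := pow_pos ht0 n
  have hrlt : Real.tan (θ / 2) ^ n < 1 := pow_lt_one₀ ht0.le ht1 (by omega)
  -- logs
  obtain ⟨ℓ, hℓ⟩ : ∃ x : ℝ, x = -Real.log (Real.tan (θ / 2)) := ⟨_, rfl⟩
  have hℓpos : 0 < ℓ := by
    rw [hℓ]; exact neg_pos.mpr (Real.log_neg ht0 ht1)
  have hlog : Real.log (Real.tan (θ / 2) ^ n) = (n : ℝ) * (-ℓ) := by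
    rw [Real.log_pow, hℓ]; ring
  have hcothalf : Real.cot (θ / 2) = (Real.tan (θ / 2))⁻¹ := by
    rw [Real.cot_eq_cos_div_sin, Real.tan_eq_sin_div_cos, inv_div]
  have hlogcot : Real.log (Real.cot (θ / 2) ^ 2) = 2 * ℓ := by
    rw [hcothalf, Real.log_pow, Real.log_inv, hℓ]; push_cast; ring
  refine ⟨n, hn1, θ, ⟨hθpos, hθlt2⟩, ⟨hrpos, hrlt⟩, ?_⟩
  show -4 * Real.log (Real.tan (θ / 2) ^ n) * Real.cot θ
      + 2 * lam₀ * Real.log (Real.cot (θ / 2) ^ 2)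
    < -2 * Real.log (Real.tan (θ / 2) ^ n) *
      (2 * Real.cot θ * Real.sqrt (1 - d ^ 2 * Real.sin θ ^ 2)
        + 2 * E θ (d ^ 2) - 2 * F θ (d ^ 2)
        + 2 * F θ₀ (d ^ 2) - 2 * E θ₀ (d ^ 2))
  rw [hlog, hlogcot]
  have key : 0 < ℓ * ((n : ℝ) * B - lam₀) := mul_pos hℓpos (by linarith)
  rw [hB, hK] at key
  nlinarith [key]
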